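/- Let T₁, T₂, T₃ ∈ B(H) with 0 ≤ T₁T₁* + T₂T₂* − T₃T₃* ≤ I and T the positive square root. For v in the de Branges–Rovnyak complement H(T) = M((I − TT*)^{1/2}) and ε > 0, there exists (w₀(ε), w₁(ε), w₂(ε), w₃(ε)) ∈ H⁴ such that w₀(ε) − T₁w₁(ε) − T₂w₂(ε) + T₃w₃(ε) → v strongly as ε → 0, and 0 ≤ ‖w₀(ε)‖² − ‖w₁(ε)‖² − ‖w₂(ε)‖² + ‖w₃(ε)‖² increases to ‖v‖²_{H(T)} as ε ↓ 0. -/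

import Mathlib

set_option synthInstance.maxHeartbeats 800000
set_option maxHeartbeats 1000000

open ContinuousLinearMap Filter
open scoped InnerProductSpace

/-- For `v` in the de Branges–Rovnyak complement `H(T) = M((I − TT^*)^{1/2})`, there are vectors
`(w₀(ε), w₁(ε), w₂(ε), w₃(ε))` with
`w₀(ε) − T₁w₁(ε) − T₂w₂(ε) + T₃w₃(ε) → v` as `ε → 0` and
`0 ≤ ‖w₀(ε)‖² − ‖w₁(ε)‖² − ‖w₂(ε)‖² + ‖w₃(ε)‖²` increasing to `‖v‖²_{H(T)}` as `ε ↓ 0`. -/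
theorem complement_range_inclusion {H : Type*} [NormedAddCommGroup H] [InnerProductSpace ℂ H]
    [CompleteSpace H] (T₁ T₂ T₃ : H →L[ℂ] H)
    (hpos : (T₁ ∘L adjoint T₁ + T₂ ∘L adjoint T₂ - T₃ ∘L adjoint T₃).IsPositive)
    (hcontr : (1 - (T₁ ∘L adjoint T₁ + T₂ ∘L adjoint T₂ - T₃ ∘L adjoint T₃)).IsPositive)
    (T : H →L[ℂ] H)
    (hT : T = CFC.sqrt (T₁ ∘L adjoint T₁ + T₂ ∘L adjoint T₂ - T₃ ∘L adjoint T₃))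
    (S : H →L[ℂ] H) (hS : S = CFC.sqrt (1 - T ∘L adjoint T))
    (v : H) (hv : v ∈ Set.range S) :
    ∃ w₀ w₁ w₂ w₃ : ℝ → H,
      Tendsto (fun ε => w₀ ε - T₁ (w₁ ε) - T₂ (w₂ ε) + T₃ (w₃ ε))
        (nhdsWithin 0 (Set.Ioi 0)) (nhds v) ∧
      (∀ ε : ℝ, 0 < ε →
        0 ≤ ‖w₀ ε‖ ^ 2 - ‖w₁ ε‖ ^ 2 - ‖w₂ ε‖ ^ 2 + ‖w₃ ε‖ ^ 2) ∧
      (∀ ε₁ ε₂ : ℝ, 0 < ε₁ → ε₁ ≤ ε₂ →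
        ‖w₀ ε₂‖ ^ 2 - ‖w₁ ε₂‖ ^ 2 - ‖w₂ ε₂‖ ^ 2 + ‖w₃ ε₂‖ ^ 2
          ≤ ‖w₀ ε₁‖ ^ 2 - ‖w₁ ε₁‖ ^ 2 - ‖w₂ ε₁‖ ^ 2 + ‖w₃ ε₁‖ ^ 2) ∧
      Tendsto (fun ε => ‖w₀ ε‖ ^ 2 - ‖w₁ ε‖ ^ 2 - ‖w₂ ε‖ ^ 2 + ‖w₃ ε‖ ^ 2)
        (nhdsWithin 0 (Set.Ioi 0))
        (nhds ((sInf {r : ℝ | ∃ y : H, S y = v ∧ r = ‖y‖}) ^ 2)) := by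
  classical
  set A₀ : H →L[ℂ] H := T₁ ∘L adjoint T₁ + T₂ ∘L adjoint T₂ - T₃ ∘L adjoint T₃ with hA₀def
  have hA₀ : (0 : H →L[ℂ] H) ≤ A₀ := (nonneg_iff_isPositive _).mpr hpos
  -- T is selfadjoint and T ∘L adjoint T = A₀
  have hTnn : (0 : H →L[ℂ] H) ≤ T := hT ▸ CFC.sqrt_nonneg _
  have hTsa : IsSelfAdjoint T := .of_nonneg hTnn
  have hTT : T ∘L adjoint T = A₀ := by
    rw [hTsa.adjoint_eq, hT]
    exact CFC.sqrt_mul_sqrt_self A₀ hA₀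
  set B : H →L[ℂ] H := 1 - T ∘L adjoint T with hBdef
  have hB : B = 1 - A₀ := by rw [hBdef, hTT]
  have hB0 : (0 : H →L[ℂ] H) ≤ B := by
    rw [hB]; exact (nonneg_iff_isPositive _).mpr hcontr
  have hBsa : IsSelfAdjoint B := .of_nonneg hB0
  have hspec : ∀ x ∈ spectrum ℝ B, 0 ≤ x := fun x hx => spectrum_nonneg_of_nonneg hB0 hx
  have hSnn : (0 : H →L[ℂ] H) ≤ S := hS ▸ CFC.sqrt_nonneg _
  have hSsa : IsSelfAdjoint S := .of_nonneg hSnn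
  have hSS : S ∘L S = B := hS ▸ CFC.sqrt_mul_sqrt_self B hB0
  have hScfc : S = cfc (fun x : ℝ => Real.sqrt x) B := by
    rw [hS, CFC.sqrt_eq_cfc, cfc_nnreal_eq_real _ B hB0]
    exact cfc_congr fun x hx => by rw [Real.coe_sqrt, Real.coe_toNNReal _ (hspec x hx)]
  -- inner product identities
  have hBinner : ∀ a b : H, ⟪B a, b⟫_ℂ = ⟪a, B b⟫_ℂ := fun a b => by
    nth_rewrite 1 [← hBsa.adjoint_eq]
    rw [adjoint_inner_left]
  have hSinner : ∀ a b : H, ⟪S a, b⟫_ℂ = ⟪a, S b⟫_ℂ := fun a b => by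
    nth_rewrite 1 [← hSsa.adjoint_eq]
    rw [adjoint_inner_left]
  -- the minimal norm solution y₀
  obtain ⟨y, hy⟩ := hv
  set K : Submodule ℂ H := LinearMap.ker (S : H →ₗ[ℂ] H) with hKdef
  haveI : CompleteSpace K := (ContinuousLinearMap.isClosed_ker S).completeSpace_coe
  set y₀ : H := y - (K.orthogonalProjectionOnto y : H) with hy₀def
  have hy₀K : y₀ ∈ Kᗮ := Submodule.sub_starProjection_mem_orthogonal (K := K) y
  have hSy₀ : S y₀ = v := by
    have h1 : S ((K.orthogonalProjectionOnto y : H)) = 0 := (K.orthogonalProjectionOnto y).2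
    rw [hy₀def, map_sub, h1, sub_zero, hy]
  -- kernels of S and B agree
  have hkerBS : ∀ x : H, B x = 0 → S x = 0 := by
    intro x hx
    have : ⟪S x, S x⟫_ℂ = 0 := by
      rw [hSinner]
      have : S (S x) = B x := by rw [← hSS]; rfl
      rw [this, hx, inner_zero_right]
    exact inner_self_eq_zero.mp this
  -- y₀ lies in the closure of the range of B
  have hy₀cl : y₀ ∈ closure (Set.range ⇑B) := by
    set R : Submodule ℂ H := LinearMap.range (B : H →ₗ[ℂ] H) with hRdef
    have hRK : Rᗮ ≤ K := by
      intro x hx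
      have hBx : B x = 0 := by
        have h0 : ⟪B (B x), x⟫_ℂ = 0 := hx (B (B x)) (LinearMap.mem_range_self _ _)
        have h0' : ⟪B x, B x⟫_ℂ = 0 := ((hBinner (B x) x).symm.trans h0)
        exact inner_self_eq_zero.mp h0'
      exact LinearMap.mem_ker.mpr (hkerBS x hBx)
    have h1 : Kᗮ ≤ Rᗮᗮ := Submodule.orthogonal_le hRK
    have h2 : Rᗮᗮ = R.topologicalClosure := Submodule.orthogonal_orthogonal_eq_closure R
    have h3 : y₀ ∈ R.topologicalClosure := h2 ▸ h1 hy₀K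
    have h4 : (R.topologicalClosure : Set H) = closure (R : Set H) :=
      Submodule.topologicalClosure_coe R
    have h5 : (R : Set H) = Set.range ⇑B := LinearMap.coe_range _
    rw [← h5]
    exact h4 ▸ h3
  -- the functions
  set q : ℝ → ℝ → ℝ := fun ε t => t / (t + ε) with hq
  set u : ℝ → ℝ → ℝ := fun ε t => Real.sqrt t / (t + ε) with hu
  have hpos' : ∀ {ε t : ℝ}, 0 < ε → t ∈ spectrum ℝ B → 0 < t + ε := by
    intro ε t hε ht
    have := hspec t ht
    linarith
  have hqc : ∀ {ε : ℝ}, 0 < ε → ContinuousOn (q ε) (spectrum ℝ B) := by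
    intro ε hε
    exact ContinuousOn.div continuousOn_id (by fun_prop)
      fun t ht => (hpos' hε ht).ne'
  have huc : ∀ {ε : ℝ}, 0 < ε → ContinuousOn (u ε) (spectrum ℝ B) := by
    intro ε hε
    exact ContinuousOn.div (Real.continuous_sqrt.continuousOn) (by fun_prop)
      fun t ht => (hpos' hε ht).ne'
  set Q : ℝ → (H →L[ℂ] H) := fun ε => cfc (q ε) B with hQ
  set z : ℝ → H := fun ε => cfc (u ε) B y₀ with hz
  -- S (z ε) = Q ε y₀
  have hSz : ∀ {ε : ℝ}, 0 < ε → S (z ε) = Q ε y₀ := by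
    intro ε hε
    have h1 : S (z ε) = (cfc (fun x : ℝ => Real.sqrt x) B * cfc (u ε) B) y₀ := by
      rw [hScfc]; rfl
    rw [h1, ← cfc_mul _ _ B (Real.continuous_sqrt.continuousOn) (huc hε)]
    have h2 : cfc (fun t : ℝ => Real.sqrt t * u ε t) B = Q ε := by
      apply cfc_congr
      intro t ht
      have ht0 := hspec t ht
      simp only [hu, hq]
      rw [← mul_div_assoc, Real.mul_self_sqrt ht0]
    rw [h2]
  -- B (z ε) = S (Q ε y₀)
  have hBz : ∀ {ε : ℝ}, 0 < ε → B (z ε) = S (Q ε y₀) := by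
    intro ε hε
    have : B (z ε) = S (S (z ε)) := by rw [← hSS]; rfl
    rw [this, hSz hε]
  -- the quadratic value equals ‖Q ε y₀‖²
  have hval : ∀ {ε : ℝ}, 0 < ε →
      ‖z ε‖ ^ 2 - ‖adjoint T₁ (z ε)‖ ^ 2 - ‖adjoint T₂ (z ε)‖ ^ 2 + ‖adjoint T₃ (z ε)‖ ^ 2
        = ‖Q ε y₀‖ ^ 2 := by
    intro ε hε
    have hterm : ∀ C : H →L[ℂ] H,
        ‖adjoint C (z ε)‖ ^ 2 = RCLike.re ⟪z ε, (C ∘L adjoint C) (z ε)⟫_ℂ := by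
      intro C
      rw [← inner_self_eq_norm_sq (𝕜 := ℂ)]
      congr 1
      rw [adjoint_inner_left C, ContinuousLinearMap.comp_apply]
    have hz2 : ‖z ε‖ ^ 2 = RCLike.re ⟪z ε, z ε⟫_ℂ := (inner_self_eq_norm_sq (𝕜 := ℂ) _).symm
    have hBapp : ⟪z ε, B (z ε)⟫_ℂ
        = ⟪z ε, z ε⟫_ℂ - ⟪z ε, (T₁ ∘L adjoint T₁) (z ε)⟫_ℂ
          - ⟪z ε, (T₂ ∘L adjoint T₂) (z ε)⟫_ℂ + ⟪z ε, (T₃ ∘L adjoint T₃) (z ε)⟫_ℂ := by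
      have : B (z ε) = z ε - ((T₁ ∘L adjoint T₁) (z ε) + (T₂ ∘L adjoint T₂) (z ε)
          - (T₃ ∘L adjoint T₃) (z ε)) := by
        rw [hB, hA₀def]
        simp only [ContinuousLinearMap.sub_apply, ContinuousLinearMap.one_apply,
          ContinuousLinearMap.add_apply]
      rw [this]
      simp only [inner_sub_right, inner_add_right]
      ring
    have hfinal : RCLike.re ⟪z ε, B (z ε)⟫_ℂ = ‖Q ε y₀‖ ^ 2 := by
      rw [hBz hε, ← hSinner, hSz hε, inner_self_eq_norm_sq (𝕜 := ℂ)]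
    rw [hterm T₁, hterm T₂, hterm T₃, hz2, ← hfinal, hBapp]
    simp only [map_sub, map_add]
  -- ‖Q ε y₀‖² = re ⟪cfc (q ε * q ε) B y₀, y₀⟫
  have hQsq : ∀ {ε : ℝ}, 0 < ε →
      ‖Q ε y₀‖ ^ 2 = RCLike.re ⟪cfc (fun t => q ε t * q ε t) B y₀, y₀⟫_ℂ := by
    intro ε hε
    have hQsa : IsSelfAdjoint (Q ε) := cfc_predicate _ _
    have h1 : ⟪Q ε (Q ε y₀), y₀⟫_ℂ = ⟪Q ε y₀, Q ε y₀⟫_ℂ := by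
      nth_rewrite 1 [← hQsa.adjoint_eq]
      rw [adjoint_inner_left]
    have hmul : cfc (fun t => q ε t * q ε t) B y₀ = Q ε (Q ε y₀) := by
      rw [cfc_mul _ _ B (hqc hε) (hqc hε)]; rfl
    rw [hmul, h1, inner_self_eq_norm_sq (𝕜 := ℂ)]
  -- key norm bounds
  have hQnorm : ∀ {ε : ℝ}, 0 < ε → ‖Q ε‖ ≤ 1 := by
    intro ε hε
    apply norm_cfc_le zero_le_one
    intro t ht
    have ht0 := hspec t ht
    rw [Real.norm_eq_abs, abs_of_nonneg (div_nonneg ht0 (hpos' hε ht).le)]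
    rw [div_le_one (hpos' hε ht)]
    linarith
  have hQBx : ∀ {ε : ℝ}, 0 < ε → ∀ x : H, ‖Q ε (B x) - B x‖ ≤ ε * ‖x‖ := by
    intro ε hε x
    have h2 : Q ε (B x) - B x = cfc (fun t : ℝ => q ε t * t - t) B x := by
      have ha : cfc (fun t : ℝ => q ε t * t - t) B
          = cfc (fun t : ℝ => q ε t * t) B - cfc (fun t : ℝ => t) B :=
        cfc_sub _ _ B (by exact (hqc hε).mul (by fun_prop)) (by fun_prop)
      have hb : cfc (fun t : ℝ => q ε t * t) B = cfc (q ε) B * cfc (fun t : ℝ => t) B :=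
        cfc_mul _ _ B (hqc hε) (by fun_prop)
      rw [ha, hb, cfc_id' ℝ B]
      simp only [ContinuousLinearMap.sub_apply, ContinuousLinearMap.mul_apply]
      rfl
    rw [h2]
    calc ‖cfc (fun t : ℝ => q ε t * t - t) B x‖
        ≤ ‖cfc (fun t : ℝ => q ε t * t - t) B‖ * ‖x‖ := le_opNorm _ _
      _ ≤ ε * ‖x‖ := by
          apply mul_le_mul_of_nonneg_right _ (norm_nonneg x)
          apply norm_cfc_le hε.le
          intro t ht
          have ht0 := hspec t ht
          have htε := hpos' hε ht
          have : q ε t * t - t = -(ε * t / (t + ε)) := by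
            simp only [hq]; field_simp; ring
          rw [this, Real.norm_eq_abs, abs_neg,
            abs_of_nonneg (by positivity)]
          rw [div_le_iff₀ htε]
          nlinarith
  -- the key strong convergence
  have hQtend : Tendsto (fun ε => Q ε y₀) (nhdsWithin 0 (Set.Ioi 0)) (nhds y₀) := by
    rw [Metric.tendsto_nhdsWithin_nhds]
    intro δ hδ
    obtain ⟨b, ⟨x, hxb⟩, hbd⟩ := Metric.mem_closure_iff.mp hy₀cl (δ/3) (by positivity)
    refine ⟨δ/3/(‖x‖+1), by positivity, ?_⟩
    intro ε hε hεd
    have hε0 : 0 < ε := hε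
    rw [Real.dist_eq, sub_zero, abs_of_pos hε0] at hεd
    have hb : ‖y₀ - B x‖ < δ/3 := by
      rw [← hxb] at hbd
      rw [← dist_eq_norm]
      exact hbd
    rw [dist_eq_norm]
    have key : Q ε y₀ - y₀ = Q ε (y₀ - B x) + (Q ε (B x) - B x) + (B x - y₀) := by
      have hms : Q ε (y₀ - B x) = Q ε y₀ - Q ε (B x) := map_sub _ _ _
      rw [hms]; abel
    rw [key]
    calc ‖Q ε (y₀ - B x) + (Q ε (B x) - B x) + (B x - y₀)‖
        ≤ ‖Q ε (y₀ - B x)‖ + ‖Q ε (B x) - B x‖ + ‖B x - y₀‖ := norm_add₃_le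
      _ < δ/3 + δ/3 + δ/3 := by
          have h1 : ‖Q ε (y₀ - B x)‖ < δ/3 := by
            calc ‖Q ε (y₀ - B x)‖ ≤ ‖Q ε‖ * ‖y₀ - B x‖ := le_opNorm _ _
              _ ≤ 1 * ‖y₀ - B x‖ :=
                  mul_le_mul_of_nonneg_right (hQnorm hε0) (norm_nonneg _)
              _ = ‖y₀ - B x‖ := one_mul _
              _ < δ/3 := hb
          have h2 : ‖Q ε (B x) - B x‖ < δ/3 := by
            calc ‖Q ε (B x) - B x‖ ≤ ε * ‖x‖ := hQBx hε0 x
              _ ≤ ε * (‖x‖ + 1) := by nlinarith [norm_nonneg x]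
              _ < δ/3/(‖x‖+1) * (‖x‖+1) := by
                  apply mul_lt_mul_of_pos_right hεd
                  positivity
              _ = δ/3 := by field_simp
          have h3 : ‖B x - y₀‖ < δ/3 := by rwa [norm_sub_rev]
          linarith
      _ = δ := by ring
  -- the infimum is ‖y₀‖
  have hbound : ∀ y' : H, S y' = v → ‖y₀‖ ≤ ‖y'‖ := by
    intro y' hy'
    have hk : y' - y₀ ∈ K := by
      rw [hKdef, LinearMap.mem_ker, map_sub, ContinuousLinearMap.coe_coe, hy', hSy₀, sub_self]
    have hinner : ⟪y₀, y' - y₀⟫_ℂ = 0 := by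
      have := (Submodule.mem_orthogonal K y₀).mp hy₀K (y' - y₀) hk
      rw [← inner_conj_symm, this, map_zero]
    have hdecomp : ‖y'‖ ^ 2 = ‖y₀‖ ^ 2 + ‖y' - y₀‖ ^ 2 := by
      have : y' = y₀ + (y' - y₀) := by abel
      rw [this, @norm_add_sq ℂ, hinner]
      simp
    nlinarith [norm_nonneg y', norm_nonneg y₀, norm_nonneg (y' - y₀)]
  have hsInf : sInf {r : ℝ | ∃ y' : H, S y' = v ∧ r = ‖y'‖} = ‖y₀‖ := by
    apply le_antisymm
    · apply csInf_le
      · exact ⟨0, fun r ⟨y', _, hr⟩ => hr ▸ norm_nonneg y'⟩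
      · exact ⟨y₀, hSy₀, rfl⟩
    · refine le_csInf ⟨‖y‖, ⟨y, hy, rfl⟩⟩ ?_
      rintro r ⟨y', hy', rfl⟩
      exact hbound y' hy'
  -- assemble
  refine ⟨z, fun ε => adjoint T₁ (z ε), fun ε => adjoint T₂ (z ε),
    fun ε => adjoint T₃ (z ε), ?_, ?_, ?_, ?_⟩
  · -- convergence to v
    have hexpr : ∀ {ε : ℝ}, 0 < ε →
        z ε - T₁ (adjoint T₁ (z ε)) - T₂ (adjoint T₂ (z ε)) + T₃ (adjoint T₃ (z ε))
          = S (Q ε y₀) := by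
      intro ε hε
      rw [← hBz hε, hB, hA₀def]
      simp only [ContinuousLinearMap.sub_apply, ContinuousLinearMap.one_apply,
        ContinuousLinearMap.add_apply, ContinuousLinearMap.comp_apply]
      abel
    have h1 : Tendsto (fun ε => S (Q ε y₀)) (nhdsWithin 0 (Set.Ioi 0)) (nhds v) := by
      rw [← hSy₀]
      exact (S.continuous.tendsto y₀).comp hQtend
    apply h1.congr'
    filter_upwards [self_mem_nhdsWithin] with ε hε
    exact (hexpr hε).symm
  · -- nonnegativity
    intro ε hε
    rw [hval hε]
    positivity
  · -- monotonicity
    intro ε₁ ε₂ hε₁ hε₁₂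
    have hε₂ : 0 < ε₂ := lt_of_lt_of_le hε₁ hε₁₂
    rw [hval hε₁, hval hε₂, hQsq hε₁, hQsq hε₂]
    have hmono : cfc (fun t => q ε₂ t * q ε₂ t) B ≤ cfc (fun t => q ε₁ t * q ε₁ t) B := by
      apply cfc_mono ?_ ((hqc hε₂).mul (hqc hε₂)) ((hqc hε₁).mul (hqc hε₁))
      intro t ht
      have ht0 := hspec t ht
      have h1 : 0 ≤ q ε₂ t := div_nonneg ht0 (hpos' hε₂ ht).le
      have h2 : q ε₂ t ≤ q ε₁ t := by
        simp only [hq]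
        rw [div_le_div_iff₀ (hpos' hε₂ ht) (hpos' hε₁ ht)]
        nlinarith
      simp only [Pi.mul_apply]
      nlinarith [div_nonneg ht0 (hpos' hε₁ ht).le]
    have hdiff : (0:H →L[ℂ] H) ≤ cfc (fun t => q ε₁ t * q ε₁ t) B
        - cfc (fun t => q ε₂ t * q ε₂ t) B := sub_nonneg.mpr hmono
    have := ((nonneg_iff_isPositive _).mp hdiff).re_inner_nonneg_left y₀
    have heq : RCLike.re ⟪(cfc (fun t => q ε₁ t * q ε₁ t) B
        - cfc (fun t => q ε₂ t * q ε₂ t) B) y₀, y₀⟫_ℂ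
        = RCLike.re ⟪cfc (fun t => q ε₁ t * q ε₁ t) B y₀, y₀⟫_ℂ
          - RCLike.re ⟪cfc (fun t => q ε₂ t * q ε₂ t) B y₀, y₀⟫_ℂ := by
      rw [ContinuousLinearMap.sub_apply, inner_sub_left, map_sub]
    rw [heq] at this
    linarith
  · -- convergence of the values
    rw [hsInf]
    have h1 : Tendsto (fun ε => ‖Q ε y₀‖ ^ 2) (nhdsWithin 0 (Set.Ioi 0)) (nhds (‖y₀‖ ^ 2)) :=
      ((continuous_norm.tendsto y₀).comp hQtend).pow 2
    apply h1.congr'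
    filter_upwards [self_mem_nhdsWithin] with ε hε
    exact (hval hε).symm
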